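/- For all integers m, n, r ≥ 0 and every integer k, in ℤ[q]: c_q^{(r)}(m+n,k) = Σ_{i=0}^{n} Σ_{j=0}^{m} [m+r]_q^{⟨n-i⟩} · qbinom(n,i) · c_q^{(r)}(m,j) · c_q(i,k-j). -/
import Mathlib


open Finset Polynomial

/-- The q-integer [n]_q = 1 + q + ⋯ + q^{n-1} in ℤ[q]. -/
noncomputable def qint (n : ℕ) : Polynomial ℤ := ∑ i ∈ range n, X ^ i

/-- The q-rising factorial [n]_q^{⟨m⟩} = ∏_{i=n}^{n+m-1} [i]_q. -/
noncomputable def qrise (n m : ℕ) : Polynomial ℤ := ∏ i ∈ range m, qint (n + i)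

/-- The q-binomial coefficient. -/
noncomputable def qbinom : ℕ → ℕ → Polynomial ℤ
  | _, 0 => 1
  | 0, _ + 1 => 0
  | n + 1, k + 1 => qbinom n k + X ^ (k + 1) * qbinom n (k + 1)

/-- The q-Stirling numbers of the first kind (natural-number index version). -/
noncomputable def qStirling1Nat : ℕ → ℕ → Polynomial ℤ
  | 0, 0 => 1
  | 0, _ + 1 => 0
  | _ + 1, 0 => 0
  | n + 1, k + 1 => qStirling1Nat n k + qint n * qStirling1Nat n (k + 1)

/-- The q-Stirling numbers of the first kind, vanishing for negative second index. -/
noncomputable def qStirling1 (n : ℕ) (k : ℤ) : Polynomial ℤ :=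
  if 0 ≤ k then qStirling1Nat n k.toNat else 0

/-- The q-r-Stirling numbers of the first kind. -/
noncomputable def qrStirling1 (r n : ℕ) (k : ℤ) : Polynomial ℤ :=
  ∑ i ∈ range (n + 1), qrise r (n - i) * qbinom n i * qStirling1 i k

lemma qbinom_eq_zero : ∀ n k : ℕ, n < k → qbinom n k = 0
  | 0, _ + 1, _ => rfl
  | n + 1, k + 1, h => by
      rw [qbinom, qbinom_eq_zero n k (by omega), qbinom_eq_zero n (k+1) (by omega)]
      ring

lemma qStirling1Nat_eq_zero : ∀ n k : ℕ, n < k → qStirling1Nat n k = 0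
  | 0, _ + 1, _ => rfl
  | n + 1, k + 1, h => by
      rw [qStirling1Nat, qStirling1Nat_eq_zero n k (by omega),
        qStirling1Nat_eq_zero n (k+1) (by omega)]
      ring

lemma qStirling1_eq_zero {n : ℕ} {k : ℤ} (h : k < 0 ∨ (n : ℤ) < k) : qStirling1 n k = 0 := by
  unfold qStirling1
  rcases h with h | h
  · rw [if_neg (by omega)]
  · split
    · exact qStirling1Nat_eq_zero _ _ (by omega)
    · rfl

lemma qStirling1_zero (k : ℤ) : qStirling1 0 k = if k = 0 then 1 else 0 := by
  by_cases h : k = 0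
  · subst h; simp [qStirling1, qStirling1Nat]
  · rw [if_neg h]
    by_cases h0 : 0 ≤ k
    · unfold qStirling1
      rw [if_pos h0]
      obtain ⟨s, rfl⟩ : ∃ s : ℕ, k = ((s:ℤ)+1) := ⟨(k-1).toNat, by omega⟩
      rw [show (((s:ℤ)+1)).toNat = s+1 by omega]
      rfl
    · exact qStirling1_eq_zero (Or.inl (by omega))

lemma qint_add (a b : ℕ) : qint (a + b) = qint a + X ^ a * qint b := by
  induction b with
  | zero => simp [qint]
  | succ b ih =>
      rw [show a + (b+1) = (a+b)+1 from rfl]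
      unfold qint at *
      rw [Finset.sum_range_succ, ih, Finset.sum_range_succ]
      ring

lemma qrise_succ (r m : ℕ) : qrise r (m + 1) = qrise r m * qint (r + m) := by
  rw [qrise, Finset.prod_range_succ]; rfl

lemma qStirling1_succ (i : ℕ) (k : ℤ) :
    qStirling1 (i + 1) k = qStirling1 i (k - 1) + qint i * qStirling1 i k := by
  by_cases hneg : k < 0
  · rw [qStirling1_eq_zero (Or.inl hneg), qStirling1_eq_zero (Or.inl (by omega : k - 1 < 0)),
      qStirling1_eq_zero (Or.inl hneg)]
    ring
  · by_cases hz : k = 0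
    · subst hz
      have h1 : qStirling1 (i+1) 0 = 0 := by
        unfold qStirling1; rw [if_pos le_rfl]; rfl
      have h2 : qStirling1 i (0 - 1) = 0 := qStirling1_eq_zero (Or.inl (by omega))
      rw [h1, h2, zero_add]
      cases i with
      | zero =>
          have : qint 0 = 0 := by simp [qint]
          rw [this]; ring
      | succ j =>
          have : qStirling1 (j+1) 0 = 0 := by
            unfold qStirling1; rw [if_pos le_rfl]; rfl
          rw [this]; ring
    · obtain ⟨s, rfl⟩ : ∃ s : ℕ, k = ((s:ℤ)+1) := ⟨(k-1).toNat, by omega⟩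
      unfold qStirling1
      rw [if_pos (by omega), if_pos (by omega : (0:ℤ) ≤ (s:ℤ)+1-1), if_pos (by omega)]
      rw [show (((s:ℤ)+1)).toNat = s+1 by omega, show (((s:ℤ)+1-1)).toNat = s by omega]
      rw [qStirling1Nat]

lemma qrStirling1_succ (r n : ℕ) (k : ℤ) :
    qrStirling1 r (n + 1) k = qrStirling1 r n (k - 1) + qint (n + r) * qrStirling1 r n k := by
  unfold qrStirling1
  rw [Finset.sum_range_succ']
  have hg : ∀ i ∈ range (n + 1),
      qrise r (n + 1 - (i+1)) * qbinom (n+1) (i+1) * qStirling1 (i+1) k =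
      (qrise r (n - i) * qbinom n i * qStirling1 i (k - 1)
        + qrise r (n - i) * qbinom n i * qint i * qStirling1 i k)
      + (qrise r (n - i) * (X ^ (i+1) * qbinom n (i+1)) * qStirling1 (i+1) k) := by
    intro i hi
    rw [show n + 1 - (i+1) = n - i by omega, qbinom, qStirling1_succ]
    ring
  rw [Finset.sum_congr rfl hg, Finset.sum_add_distrib, Finset.sum_add_distrib]
  have hshift : ∑ i ∈ range (n + 1), qrise r (n - i) * (X ^ (i+1) * qbinom n (i+1)) * qStirling1 (i+1) k
      = (∑ i ∈ range (n + 1), qrise r (n + 1 - i) * X ^ i * qbinom n i * qStirling1 i k)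
        - qrise r (n + 1) * X ^ 0 * qbinom n 0 * qStirling1 0 k := by
    have h := Finset.sum_range_succ' (fun i => qrise r (n + 1 - i) * X ^ i * qbinom n i * qStirling1 i k) (n + 1)
    rw [Finset.sum_range_succ (fun i => qrise r (n + 1 - i) * X ^ i * qbinom n i * qStirling1 i k) (n+1),
      qbinom_eq_zero n (n+1) (by omega)] at h
    simp only [mul_zero, zero_mul, add_zero] at h
    have h2 : ∀ i ∈ range (n+1),
        qrise r (n + 1 - (i+1)) * X ^ (i+1) * qbinom n (i+1) * qStirling1 (i+1) k
        = qrise r (n - i) * (X ^ (i+1) * qbinom n (i+1)) * qStirling1 (i+1) k := by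
      intro i hi; rw [show n + 1 - (i+1) = n - i by omega]; ring
    rw [Finset.sum_congr rfl h2, show n + 1 - 0 = n + 1 from rfl] at h
    rw [h]; ring
  rw [hshift]
  rw [Finset.mul_sum]
  have hcomb : ∀ i ∈ range (n + 1),
      qint (n + r) * (qrise r (n - i) * qbinom n i * qStirling1 i k)
      = qrise r (n - i) * qbinom n i * qint i * qStirling1 i k
        + qrise r (n + 1 - i) * X ^ i * qbinom n i * qStirling1 i k := by
    intro i hi
    simp only [Finset.mem_range] at hi
    rw [show n + 1 - i = (n - i) + 1 by omega, qrise_succ]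
    have h2 : qint (n + r) = qint i + X ^ i * qint (r + (n - i)) := by
      have h3 := qint_add i (r + (n - i))
      rw [show i + (r + (n - i)) = n + r by omega] at h3
      exact h3
    rw [h2]
    ring
  rw [Finset.sum_congr rfl hcomb, Finset.sum_add_distrib]
  have h0 : qrise r (n + 1 - 0) * qbinom (n+1) 0 * qStirling1 0 k
      = qrise r (n + 1) * X ^ 0 * qbinom n 0 * qStirling1 0 k := by
    simp [qbinom]
  rw [h0]
  ring

lemma qrStirling1_eq_zero {r m : ℕ} {k : ℤ} (h : k < 0 ∨ (m : ℤ) < k) : qrStirling1 r m k = 0 := by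
  unfold qrStirling1
  apply Finset.sum_eq_zero
  intro i hi
  simp only [Finset.mem_range] at hi
  rw [qStirling1_eq_zero (by rcases h with h | h; exact Or.inl h; right; omega)]
  ring

lemma qrStirling1_conv (m r : ℕ) (k : ℤ) : ∀ n : ℕ,
    qrStirling1 r (m + n) k =
      ∑ j ∈ range (m + 1), qrStirling1 r m (j : ℤ) * qrStirling1 (m + r) n (k - j) := by
  intro n
  induction n generalizing k with
  | zero =>
      simp only [Nat.add_zero]
      have h0 : ∀ j ∈ range (m + 1),
          qrStirling1 r m (j : ℤ) * qrStirling1 (m + r) 0 (k - j)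
          = if (j : ℤ) = k then qrStirling1 r m (j : ℤ) else 0 := by
        intro j hj
        have hx : qrStirling1 (m + r) 0 (k - j) = if k - (j:ℤ) = 0 then 1 else 0 := by
          unfold qrStirling1
          rw [Finset.sum_range_one, qStirling1_zero]
          simp [qrise, qbinom]
        rw [hx]
        by_cases h : (j : ℤ) = k
        · rw [if_pos (by omega), if_pos h, mul_one]
        · rw [if_neg (by omega), if_neg h, mul_zero]
      rw [Finset.sum_congr rfl h0]
      by_cases h : 0 ≤ k ∧ k ≤ (m : ℤ)
      · have ht : k.toNat ∈ range (m + 1) := by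
          simp only [Finset.mem_range]; omega
        rw [Finset.sum_eq_single_of_mem k.toNat ht
          (fun j hj hne => if_neg (by
            simp only [Finset.mem_range] at hj
            omega))]
        rw [if_pos (by omega)]
        congr 1
        omega
      · rw [qrStirling1_eq_zero (by omega)]
        refine (Finset.sum_eq_zero fun j hj => ?_).symm
        simp only [Finset.mem_range] at hj
        rw [if_neg (by omega)]
  | succ n ih =>
      rw [show m + (n + 1) = (m + n) + 1 from rfl, qrStirling1_succ, ih, ih]
      have hR : ∀ j ∈ range (m + 1),
          qrStirling1 r m (j:ℤ) * qrStirling1 (m + r) (n + 1) (k - j)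
          = qrStirling1 r m (j:ℤ) * qrStirling1 (m + r) n ((k - 1) - j)
            + qint (m + n + r) * (qrStirling1 r m (j:ℤ) * qrStirling1 (m + r) n (k - j)) := by
        intro j hj
        rw [qrStirling1_succ, show n + (m + r) = m + n + r by omega,
          show k - (j:ℤ) - 1 = (k - 1) - j by ring]
        ring
      rw [Finset.sum_congr rfl hR, Finset.sum_add_distrib, ← Finset.mul_sum]

theorem qrStirling1_add (m n r : ℕ) (k : ℤ) :
    qrStirling1 r (m + n) k =
      ∑ i ∈ range (n + 1), ∑ j ∈ range (m + 1),
        qrise (m + r) (n - i) * qbinom n i * qrStirling1 r m (j : ℤ) *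
          qStirling1 i (k - j) := by
  rw [qrStirling1_conv m r k n]
  rw [Finset.sum_comm]
  apply Finset.sum_congr rfl
  intro j hj
  calc qrStirling1 r m (j:ℤ) * qrStirling1 (m + r) n (k - j)
      = ∑ i ∈ range (n + 1),
          qrStirling1 r m (j:ℤ) * (qrise (m + r) (n - i) * qbinom n i * qStirling1 i (k - j)) := by
        rw [← Finset.mul_sum]; rfl
    _ = _ := Finset.sum_congr rfl (fun i hi => by ring)
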